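/- Let X = {a_1,…,a_ℓ} be a finite set of ℓ distinct points and N ≥ 1. Then γ ∈ P_sym(X^N) is an extreme point of the convex set P_sym(X^N) if and only if γ = γ_λ for some λ ∈ P_{1/N}(X). Moreover the map λ ↦ γ_λ is injective and the one-point marginal of γ_λ equals λ, so each extreme point of P_sym(X^N) is uniquely recovered from its one-point marginal, and the one-point marginals of the extreme points are exactly the elements of P_{1/N}(X). -/

import Mathlib

open Finset

noncomputable def symmetrize (N ℓ : ℕ) (γ : (Fin N → Fin ℓ) → ℝ) : (Fin N → Fin ℓ) → ℝ :=
  fun x => (1 / (Nat.factorial N : ℝ)) * ∑ σ : Equiv.Perm (Fin N), γ (x ∘ σ)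

def IsProbVec {α : Type*} [Fintype α] (p : α → ℝ) : Prop :=
  (∀ x, 0 ≤ p x) ∧ ∑ x, p x = 1

def IsSymmFun (N ℓ : ℕ) (γ : (Fin N → Fin ℓ) → ℝ) : Prop :=
  ∀ (σ : Equiv.Perm (Fin N)) (x : Fin N → Fin ℓ), γ (x ∘ σ) = γ x

def PSym (N ℓ : ℕ) : Set ((Fin N → Fin ℓ) → ℝ) :=
  {γ | IsProbVec γ ∧ IsSymmFun N ℓ γ}

noncomputable def margOf (N ℓ : ℕ) (x : Fin N → Fin ℓ) : Fin ℓ → ℝ :=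
  fun j => ((Finset.univ.filter fun k => x k = j).card : ℝ) / (N : ℝ)

noncomputable def QuantFinset (N ℓ : ℕ) : Finset (Fin ℓ → ℝ) :=
  Finset.image (margOf N ℓ) Finset.univ

noncomputable def gammaLam (N ℓ : ℕ) (lam : Fin ℓ → ℝ) : (Fin N → Fin ℓ) → ℝ :=
  if h : ∃ i : Fin N → Fin ℓ, margOf N ℓ i = lam then
    symmetrize N ℓ (fun x => if x = h.choose then 1 else 0)
  else 0

noncomputable def marg1 (N ℓ : ℕ) [NeZero N] (γ : (Fin N → Fin ℓ) → ℝ) : Fin ℓ → ℝ :=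
  fun j => ∑ x : Fin N → Fin ℓ, if x 0 = j then γ x else 0

noncomputable def marg2 (N ℓ : ℕ) [NeZero N] (γ : (Fin N → Fin ℓ) → ℝ) : Fin ℓ → Fin ℓ → ℝ :=
  fun j k => ∑ x : Fin N → Fin ℓ, if x 0 = j ∧ x 1 = k then γ x else 0

noncomputable def cCoef (N ℓ : ℕ) (c : (Fin N → Fin ℓ) → ℝ) (lam : Fin ℓ → ℝ) : ℝ :=
  ∑ x : Fin N → Fin ℓ, gammaLam N ℓ lam x * c x


section Aux

variable (N ℓ : ℕ)

lemma margOf_comp (x : Fin N → Fin ℓ) (σ : Equiv.Perm (Fin N)) :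
    margOf N ℓ (x ∘ σ) = margOf N ℓ x := by
  funext j
  unfold margOf
  congr 2
  apply Finset.card_bij (fun k _ => σ k)
  · intro k hk
    simp only [Finset.mem_filter, Finset.mem_univ, true_and, Function.comp_apply] at hk ⊢
    exact hk
  · intro k₁ _ k₂ _ h
    exact σ.injective h
  · intro k hk
    simp only [Finset.mem_filter, Finset.mem_univ, true_and, Function.comp_apply] at hk ⊢
    exact ⟨σ.symm k, by simpa using hk, by simp⟩

lemma exists_perm [NeZero N] (x y : Fin N → Fin ℓ) (h : margOf N ℓ x = margOf N ℓ y) :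
    ∃ σ : Equiv.Perm (Fin N), x ∘ σ = y := by
  have hcard : ∀ j, Fintype.card {k // y k = j} = Fintype.card {k // x k = j} := by
    intro j
    have h1 := congrFun h j
    unfold margOf at h1
    have hN : (N : ℝ) ≠ 0 := Nat.cast_ne_zero.mpr (NeZero.ne N)
    have h3 : (Finset.univ.filter fun k => x k = j).card
        = (Finset.univ.filter fun k => y k = j).card := by
      field_simp at h1
      exact_mod_cast h1
    rw [Fintype.card_subtype, Fintype.card_subtype, h3]
  let e : ∀ j, {k // y k = j} ≃ {k // x k = j} := fun j => Fintype.equivOfCardEq (hcard j)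
  refine ⟨(Equiv.sigmaFiberEquiv y).symm.trans
    ((Equiv.sigmaCongrRight e).trans (Equiv.sigmaFiberEquiv x)), ?_⟩
  funext k
  exact (e (y k) ⟨k, rfl⟩).2

lemma symmetrize_symm (γ : (Fin N → Fin ℓ) → ℝ) : IsSymmFun N ℓ (symmetrize N ℓ γ) := by
  intro τ x
  unfold symmetrize
  congr 1
  apply Fintype.sum_equiv (Equiv.mulLeft τ)
  intro σ
  exact congrArg γ (funext fun k => by simp [Equiv.Perm.mul_apply])

lemma sum_symmetrize (γ : (Fin N → Fin ℓ) → ℝ) :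
    ∑ x, symmetrize N ℓ γ x = ∑ x, γ x := by
  unfold symmetrize
  rw [← Finset.mul_sum, Finset.sum_comm]
  have h1 : ∀ σ : Equiv.Perm (Fin N), ∑ x : Fin N → Fin ℓ, γ (x ∘ σ) = ∑ x, γ x := by
    intro σ
    apply Fintype.sum_bijective (fun x => x ∘ ⇑σ) ?_ _ _ (fun x => rfl)
    refine Function.bijective_iff_has_inverse.mpr ⟨fun g => g ∘ ⇑σ.symm, ?_, ?_⟩ <;>
      intro g <;> funext k <;> simp
  rw [Finset.sum_congr rfl (fun σ _ => h1 σ), Finset.sum_const, Finset.card_univ,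
    Fintype.card_perm, Fintype.card_fin, nsmul_eq_mul]
  have hfac : ((N.factorial : ℝ)) ≠ 0 := Nat.cast_ne_zero.mpr N.factorial_ne_zero
  field_simp

noncomputable def Orb (lam : Fin ℓ → ℝ) : Finset (Fin N → Fin ℓ) :=
  Finset.univ.filter fun x => margOf N ℓ x = lam

lemma gammaLam_vanish (lam : Fin ℓ → ℝ) (x : Fin N → Fin ℓ)
    (hx : margOf N ℓ x ≠ lam) : gammaLam N ℓ lam x = 0 := by
  unfold gammaLam
  split
  · next h =>
    have hch : margOf N ℓ h.choose = lam := h.choose_spec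
    unfold symmetrize
    rw [mul_eq_zero]
    right
    apply Finset.sum_eq_zero
    intro σ _
    dsimp only
    rw [if_neg]
    intro hc
    apply hx
    rw [← margOf_comp N ℓ x σ, hc, hch]
  · rfl

lemma gammaLam_mem (lam : Fin ℓ → ℝ) (hlam : lam ∈ QuantFinset N ℓ) :
    gammaLam N ℓ lam ∈ PSym N ℓ := by
  obtain ⟨i, -, hi⟩ := Finset.mem_image.mp hlam
  have h : ∃ i : Fin N → Fin ℓ, margOf N ℓ i = lam := ⟨i, hi⟩
  rw [gammaLam, dif_pos h]
  refine ⟨⟨?_, ?_⟩, symmetrize_symm N ℓ _⟩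
  · intro x
    unfold symmetrize
    apply mul_nonneg (by positivity)
    apply Finset.sum_nonneg
    intro σ _
    dsimp only
    split <;> norm_num
  · rw [sum_symmetrize]
    rw [Finset.sum_ite_eq' Finset.univ h.choose (fun _ => (1:ℝ))]
    simp

lemma eq_unif [NeZero N] (lam : Fin ℓ → ℝ) (hlam : lam ∈ QuantFinset N ℓ)
    (δ : (Fin N → Fin ℓ) → ℝ) (hδ : δ ∈ PSym N ℓ)
    (h0 : ∀ x, margOf N ℓ x ≠ lam → δ x = 0) :
    δ = fun x => if margOf N ℓ x = lam then (1:ℝ)/((Orb N ℓ lam).card : ℝ) else 0 := by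
  obtain ⟨i₀, -, hi₀⟩ := Finset.mem_image.mp hlam
  obtain ⟨⟨hnn, hsum⟩, hsymm⟩ := hδ
  have hconst : ∀ x, margOf N ℓ x = lam → δ x = δ i₀ := by
    intro x hx
    obtain ⟨σ, hσ⟩ := exists_perm N ℓ i₀ x (by rw [hi₀, hx])
    rw [← hσ, hsymm]
  have hi₀mem : i₀ ∈ Orb N ℓ lam := Finset.mem_filter.mpr ⟨Finset.mem_univ _, hi₀⟩
  have hcardpos : (0:ℝ) < ((Orb N ℓ lam).card : ℝ) := by
    have := Finset.card_pos.mpr ⟨i₀, hi₀mem⟩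
    exact_mod_cast this
  have hsum2 : ((Orb N ℓ lam).card : ℝ) * δ i₀ = 1 := by
    rw [← hsum, ← Finset.sum_filter_add_sum_filter_not Finset.univ
      (fun x => margOf N ℓ x = lam) δ]
    have e1 : ∑ x ∈ Finset.univ.filter (fun x => margOf N ℓ x = lam), δ x
        = ((Orb N ℓ lam).card : ℝ) * δ i₀ := by
      rw [Finset.sum_congr rfl (fun x hx => hconst x (Finset.mem_filter.mp hx).2)]
      rw [Finset.sum_const, nsmul_eq_mul]
      rfl
    have e2 : ∑ x ∈ Finset.univ.filter (fun x => ¬ margOf N ℓ x = lam), δ x = 0 := by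
      apply Finset.sum_eq_zero
      intro x hx
      exact h0 x (Finset.mem_filter.mp hx).2
    rw [e1, e2, add_zero]
  have hδi₀ : δ i₀ = 1 / ((Orb N ℓ lam).card : ℝ) := by
    rw [eq_div_iff (ne_of_gt hcardpos), mul_comm]
    exact hsum2
  funext x
  by_cases hx : margOf N ℓ x = lam
  · rw [if_pos hx, hconst x hx, hδi₀]
  · rw [if_neg hx, h0 x hx]

lemma gammaLam_formula [NeZero N] (lam : Fin ℓ → ℝ) (hlam : lam ∈ QuantFinset N ℓ) :
    gammaLam N ℓ lam
    = fun x => if margOf N ℓ x = lam then (1:ℝ)/((Orb N ℓ lam).card : ℝ) else 0 :=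
  eq_unif N ℓ lam hlam _ (gammaLam_mem N ℓ lam hlam) (gammaLam_vanish N ℓ lam)

end Aux

lemma marg1_gammaLam (ℓ N : ℕ) [NeZero N] (lam : Fin ℓ → ℝ) (hlam : lam ∈ QuantFinset N ℓ) :
    marg1 N ℓ (gammaLam N ℓ lam) = lam := by
  obtain ⟨n, rfl⟩ : ∃ n, N = n + 1 := Nat.exists_eq_succ_of_ne_zero (NeZero.ne N)
  obtain ⟨i, -, hi⟩ := Finset.mem_image.mp hlam
  have h : ∃ i : Fin (n+1) → Fin ℓ, margOf (n+1) ℓ i = lam := ⟨i, hi⟩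
  set i₀ := h.choose with hi₀def
  have hch : margOf (n+1) ℓ i₀ = lam := h.choose_spec
  funext j
  unfold marg1
  rw [gammaLam, dif_pos h]
  unfold symmetrize
  set c : ℝ := 1 / (((n+1).factorial : ℕ) : ℝ) with hc
  have key : ∀ x : Fin (n+1) → Fin ℓ,
      (if x 0 = j then c * ∑ σ : Equiv.Perm (Fin (n+1)),
          (if x ∘ ⇑σ = i₀ then (1:ℝ) else 0) else 0)
      = c * ∑ σ : Equiv.Perm (Fin (n+1)),
          (if x = i₀ ∘ ⇑σ⁻¹ ∧ x 0 = j then (1:ℝ) else 0) := by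
    intro x
    have hcond : ∀ σ : Equiv.Perm (Fin (n+1)), (x ∘ ⇑σ = i₀) ↔ (x = i₀ ∘ ⇑σ⁻¹) := by
      intro σ
      constructor
      · intro hxe; funext k
        have := congrFun hxe (σ⁻¹ k)
        simpa using this
      · intro hxe; funext k
        have := congrFun hxe (σ k)
        simpa using this
    by_cases hx : x 0 = j
    · rw [if_pos hx]
      congr 1
      apply Finset.sum_congr rfl
      intro σ _
      simp only [hcond σ, hx, and_true]
    · rw [if_neg hx]
      symm
      rw [mul_eq_zero]
      right
      apply Finset.sum_eq_zero
      intro σ _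
      simp [hx]
  rw [Finset.sum_congr rfl (fun x _ => key x), ← Finset.mul_sum, Finset.sum_comm]
  have inner : ∀ σ : Equiv.Perm (Fin (n+1)),
      (∑ x : Fin (n+1) → Fin ℓ, if x = i₀ ∘ ⇑σ⁻¹ ∧ x 0 = j then (1:ℝ) else 0)
      = if i₀ (σ⁻¹ 0) = j then (1:ℝ) else 0 := by
    intro σ
    rw [Finset.sum_eq_single (i₀ ∘ ⇑σ⁻¹)]
    · simp
    · intro b _ hb; exact if_neg (fun h => hb h.1)
    · simp
  rw [Finset.sum_congr rfl (fun σ _ => inner σ)]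
  have hinv : (∑ σ : Equiv.Perm (Fin (n+1)), if i₀ (σ⁻¹ 0) = j then (1:ℝ) else 0)
      = ∑ σ : Equiv.Perm (Fin (n+1)), if i₀ (σ 0) = j then (1:ℝ) else 0 := by
    apply Fintype.sum_equiv (Equiv.inv (Equiv.Perm (Fin (n+1))))
      (fun σ => if i₀ (σ⁻¹ 0) = j then (1:ℝ) else 0)
      (fun σ => if i₀ (σ 0) = j then (1:ℝ) else 0)
    intro σ
    rfl
  rw [hinv]
  have hdec : (∑ σ : Equiv.Perm (Fin (n+1)), if i₀ (σ 0) = j then (1:ℝ) else 0)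
      = ∑ pe : Fin (n+1) × Equiv.Perm (Fin n),
          if i₀ pe.1 = j then (1:ℝ) else 0 := by
    rw [← Equiv.sum_comp (Equiv.Perm.decomposeFin).symm
      (fun σ : Equiv.Perm (Fin (n+1)) => if i₀ (σ 0) = j then (1:ℝ) else 0)]
    apply Finset.sum_congr rfl
    intro pe _
    rw [show (Equiv.Perm.decomposeFin.symm pe) 0 = pe.1 from
      Equiv.Perm.decomposeFin_symm_apply_zero pe.1 pe.2]
  rw [hdec, Fintype.sum_prod_type]
  have step : ∀ p : Fin (n+1), (∑ _e : Equiv.Perm (Fin n), if i₀ p = j then (1:ℝ) else 0)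
      = (n.factorial : ℝ) * (if i₀ p = j then (1:ℝ) else 0) := by
    intro p
    rw [Finset.sum_const, Finset.card_univ, Fintype.card_perm, Fintype.card_fin,
      nsmul_eq_mul]
  rw [Finset.sum_congr rfl (fun p _ => step p), ← Finset.mul_sum, Finset.sum_boole]
  rw [← hch]
  unfold margOf
  rw [hc]
  have hfact : (((n+1).factorial : ℕ) : ℝ) = ((n:ℝ)+1) * (n.factorial : ℝ) := by
    rw [Nat.factorial_succ]
    push_cast
    ring
  rw [hfact]
  have hnf : (n.factorial : ℝ) ≠ 0 := Nat.cast_ne_zero.mpr n.factorial_ne_zero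
  have hn1 : ((n:ℝ)+1) ≠ 0 := by positivity
  push_cast
  field_simp

/-- The extreme points of P_sym(X^N) are exactly the measures γ_λ,
λ ∈ P_{1/N}(X); the map λ ↦ γ_λ is injective on P_{1/N}(X) and the one-point
marginal of γ_λ equals λ. -/
theorem extreme_points_of_PSym (ℓ N : ℕ) [NeZero N] (γ : (Fin N → Fin ℓ) → ℝ) :
    (γ ∈ Set.extremePoints ℝ (PSym N ℓ) ↔
      ∃ lam ∈ QuantFinset N ℓ, γ = gammaLam N ℓ lam)
    ∧ Set.InjOn (gammaLam N ℓ) ↑(QuantFinset N ℓ)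
    ∧ ∀ lam ∈ QuantFinset N ℓ, marg1 N ℓ (gammaLam N ℓ lam) = lam := by
  refine ⟨?_, ?_, fun lam hlam => marg1_gammaLam ℓ N lam hlam⟩
  · constructor
    · -- extreme → gammaLam
      intro hext
      rw [mem_extremePoints] at hext
      obtain ⟨hmem, hext⟩ := hext
      obtain ⟨⟨hnn, hsum⟩, hsymm⟩ := hmem
      -- find a point of positive mass
      have hex : ∃ x₀, 0 < γ x₀ := by
        by_contra hcon
        push_neg at hcon
        have : ∀ x, γ x = 0 := fun x => le_antisymm (hcon x) (hnn x)
        rw [Finset.sum_congr rfl (fun x _ => this x)] at hsum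
        simp at hsum
      obtain ⟨x₀, hx₀⟩ := hex
      set lam := margOf N ℓ x₀ with hlamdef
      have hlamQ : lam ∈ QuantFinset N ℓ :=
        Finset.mem_image.mpr ⟨x₀, Finset.mem_univ _, rfl⟩
      refine ⟨lam, hlamQ, ?_⟩
      have h0 : ∀ y, margOf N ℓ y ≠ lam → γ y = 0 := by
        by_contra hcon
        push_neg at hcon
        obtain ⟨y, hy, hyne⟩ := hcon
        have hypos : 0 < γ y := lt_of_le_of_ne (hnn y) (Ne.symm hyne)
        set t := ∑ x ∈ Finset.univ.filter (fun x => margOf N ℓ x = lam), γ x with htdef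
        have hx₀mem : x₀ ∈ Finset.univ.filter (fun x => margOf N ℓ x = lam) :=
          Finset.mem_filter.mpr ⟨Finset.mem_univ _, rfl⟩
        have hymem : y ∈ Finset.univ.filter (fun x => ¬ margOf N ℓ x = lam) :=
          Finset.mem_filter.mpr ⟨Finset.mem_univ _, hy⟩
        have ht0 : 0 < t := by
          have := Finset.single_le_sum (f := γ) (fun x _ => hnn x) hx₀mem
          linarith
        have hsplit : t + ∑ x ∈ Finset.univ.filter (fun x => ¬ margOf N ℓ x = lam), γ x
            = 1 := by
          rw [htdef, Finset.sum_filter_add_sum_filter_not]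
          exact hsum
        have ht1 : t < 1 := by
          have := Finset.single_le_sum (f := γ) (fun x _ => hnn x) hymem
          linarith
        set a : (Fin N → Fin ℓ) → ℝ :=
          fun x => if margOf N ℓ x = lam then γ x / t else 0 with hadef
        set b : (Fin N → Fin ℓ) → ℝ :=
          fun x => if margOf N ℓ x = lam then 0 else γ x / (1 - t) with hbdef
        have haP : a ∈ PSym N ℓ := by
          refine ⟨⟨?_, ?_⟩, ?_⟩
          · intro x
            rw [hadef]
            dsimp only
            split
            · exact div_nonneg (hnn x) (le_of_lt ht0)
            · exact le_refl 0
          · rw [hadef]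
            dsimp only
            rw [← Finset.sum_filter]
            rw [← Finset.sum_div, ← htdef, div_self (ne_of_gt ht0)]
          · intro σ x
            rw [hadef]
            dsimp only
            rw [margOf_comp, hsymm]
        have hbP : b ∈ PSym N ℓ := by
          refine ⟨⟨?_, ?_⟩, ?_⟩
          · intro x
            rw [hbdef]
            dsimp only
            split
            · exact le_refl 0
            · exact div_nonneg (hnn x) (by linarith)
          · rw [hbdef]
            dsimp only
            rw [Finset.sum_ite, Finset.sum_const_zero, zero_add, ← Finset.sum_div]
            rw [div_eq_one_iff_eq (by linarith : (1:ℝ) - t ≠ 0)]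
            linarith [hsplit]
          · intro σ x
            rw [hbdef]
            dsimp only
            rw [margOf_comp, hsymm]
        have hseg : γ ∈ openSegment ℝ a b := by
          refine ⟨t, 1 - t, ht0, by linarith, by ring, ?_⟩
          funext x
          simp only [Pi.add_apply, Pi.smul_apply, smul_eq_mul, hadef, hbdef]
          by_cases hx : margOf N ℓ x = lam
          · rw [if_pos hx, if_pos hx]
            field_simp
            ring
          · rw [if_neg hx, if_neg hx]
            have h1t : (1:ℝ) - t ≠ 0 := by linarith
            field_simp
            ring
        have := (hext a haP b hbP hseg).1
        have hya : a y = 0 := by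
          rw [hadef]
          dsimp only
          rw [if_neg hy]
        rw [this] at hya
        linarith
      rw [eq_unif N ℓ lam hlamQ γ ⟨⟨hnn, hsum⟩, hsymm⟩ h0,
        gammaLam_formula N ℓ lam hlamQ]
    · -- gammaLam → extreme
      rintro ⟨lam, hlam, rfl⟩
      rw [mem_extremePoints]
      refine ⟨gammaLam_mem N ℓ lam hlam, ?_⟩
      intro a haP b hbP hseg
      obtain ⟨t₁, t₂, ht₁, ht₂, htsum, heq⟩ := hseg
      have hvan : ∀ x, margOf N ℓ x ≠ lam → a x = 0 ∧ b x = 0 := by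
        intro x hx
        have h0 : gammaLam N ℓ lam x = 0 := gammaLam_vanish N ℓ lam x hx
        have heqx : t₁ * a x + t₂ * b x = 0 := by
          have := congrFun heq x
          simp only [Pi.add_apply, Pi.smul_apply, smul_eq_mul] at this
          rw [this, h0]
        have ha0 : 0 ≤ t₁ * a x := mul_nonneg (le_of_lt ht₁) (haP.1.1 x)
        have hb0 : 0 ≤ t₂ * b x := mul_nonneg (le_of_lt ht₂) (hbP.1.1 x)
        constructor
        · have : t₁ * a x = 0 := by linarith
          exact (mul_eq_zero.mp this).resolve_left (ne_of_gt ht₁)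
        · have : t₂ * b x = 0 := by linarith
          exact (mul_eq_zero.mp this).resolve_left (ne_of_gt ht₂)
      constructor
      · rw [eq_unif N ℓ lam hlam a haP (fun x hx => (hvan x hx).1),
          gammaLam_formula N ℓ lam hlam]
      · rw [eq_unif N ℓ lam hlam b hbP (fun x hx => (hvan x hx).2),
          gammaLam_formula N ℓ lam hlam]
  · -- injectivity
    intro lam₁ h₁ lam₂ h₂ heq
    have e1 := marg1_gammaLam ℓ N lam₁ h₁
    have e2 := marg1_gammaLam ℓ N lam₂ h₂
    rw [← e1, ← e2, heq]
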